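/- Let L = K(η) be a simple algebraic valued extension with valuation v and e(L/K,v) = 1. Define the valuation ν on K[x] by ν(f) := v(f(η)). Let Q = {Q_i}_{i∈I} be a complete set for ν, i.e., for every f ∈ K[x] there exists i with deg(Q_i) ≤ deg(f) and ν(f) = ν_{Q_i}(f). For each i with Q_i(η) ≠ 0 choose a_i ∈ K with ν(Q_i) = v(a_i), and set Q̃_i = Q_i/a_i. Then the valuation ring O_L equals the O_K-subalgebra of L generated by the elements Q̃_i(η). -/

import Mathlib

/-- The truncation of `ν` at a monic polynomial `q`: the minimum of `ν (f_i * q^i)`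
over the `q`-expansion `f = ∑ f_i q^i` (with `deg f_i < deg q`). -/
noncomputable def truncAdd {K Γ : Type*} [Field K] [AddCommGroup Γ] [LinearOrder Γ] [IsOrderedAddMonoid Γ]
    (ν : Polynomial K → WithTop Γ) (q f : Polynomial K) : WithTop Γ :=
  (Finset.range (f.natDegree + 1)).inf fun i => ν ((f /ₘ q ^ i) %ₘ q * q ^ i)

open Polynomial


lemma divByMonic_pow_succ {K : Type*} [Field K] (q : K[X]) (hq : q.Monic)
    (hdeg : 1 ≤ q.degree) (f : K[X]) (n : ℕ) :
    f /ₘ q ^ (n + 1) = (f /ₘ q ^ n) /ₘ q := by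
  have hd : 0 < q.natDegree := natDegree_pos_iff_degree_pos.mpr (lt_of_lt_of_le zero_lt_one hdeg)
  have hqn : ∀ m : ℕ, (q ^ m).degree = (m * q.natDegree : ℕ) := by
    intro m
    rw [degree_eq_natDegree (hq.pow m).ne_zero, hq.natDegree_pow]
  refine (div_modByMonic_unique ((f /ₘ q ^ n) /ₘ q)
    (f %ₘ q ^ n + q ^ n * ((f /ₘ q ^ n) %ₘ q)) (hq.pow (n + 1)) ⟨?_, ?_⟩).1
  · have h1 := modByMonic_add_div f (q ^ n)
    have h2 := modByMonic_add_div (f /ₘ q ^ n) q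
    calc f %ₘ q ^ n + q ^ n * ((f /ₘ q ^ n) %ₘ q) + q ^ (n + 1) * ((f /ₘ q ^ n) /ₘ q)
        = f %ₘ q ^ n + q ^ n * ((f /ₘ q ^ n) %ₘ q + q * ((f /ₘ q ^ n) /ₘ q)) := by ring
      _ = f := by rw [h2, h1]
  · have hb : (f %ₘ q ^ n).degree < (q ^ (n + 1)).degree := by
      refine lt_of_lt_of_le (degree_modByMonic_lt f (hq.pow n)) ?_
      rw [hqn n, hqn (n + 1)]
      exact_mod_cast Nat.cast_le.mpr (Nat.mul_le_mul_right _ (Nat.le_succ n))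
    have hc : (q ^ n * ((f /ₘ q ^ n) %ₘ q)).degree < (q ^ (n + 1)).degree := by
      rcases eq_or_ne ((f /ₘ q ^ n) %ₘ q) 0 with h | h
      · rw [h, mul_zero, degree_zero]
        exact lt_of_le_of_lt bot_le (by rw [hqn (n+1)]; exact_mod_cast WithBot.bot_lt_coe _)
      · rw [degree_mul, degree_eq_natDegree (hq.pow n).ne_zero,
          degree_eq_natDegree h, hqn (n + 1), hq.natDegree_pow]
        have hlt : ((f /ₘ q ^ n) %ₘ q).natDegree < q.natDegree :=
          natDegree_lt_natDegree h (degree_modByMonic_lt _ hq)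
        refine Nat.cast_lt.mpr ?_
        rw [Nat.succ_mul]
        exact Nat.add_lt_add_left hlt _
    calc (f %ₘ q ^ n + q ^ n * ((f /ₘ q ^ n) %ₘ q)).degree
        ≤ max (f %ₘ q ^ n).degree (q ^ n * ((f /ₘ q ^ n) %ₘ q)).degree := degree_add_le _ _
      _ < (q ^ (n + 1)).degree := max_lt hb hc

lemma qexp_partial {K : Type*} [Field K] (q : K[X]) (hq : q.Monic)
    (hdeg : 1 ≤ q.degree) (f : K[X]) (n : ℕ) :
    f = (∑ j ∈ Finset.range n, ((f /ₘ q ^ j) %ₘ q) * q ^ j) + (f /ₘ q ^ n) * q ^ n := by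
  induction n with
  | zero => simp [divByMonic_one]
  | succ n ih =>
    rw [Finset.sum_range_succ]
    have h2 := modByMonic_add_div (f /ₘ q ^ n) q
    rw [divByMonic_pow_succ q hq hdeg f n]
    calc f = (∑ j ∈ Finset.range n, ((f /ₘ q ^ j) %ₘ q) * q ^ j) + (f /ₘ q ^ n) * q ^ n := ih
      _ = (∑ j ∈ Finset.range n, ((f /ₘ q ^ j) %ₘ q) * q ^ j)
          + ((f /ₘ q ^ n) %ₘ q + q * ((f /ₘ q ^ n) /ₘ q)) * q ^ n := by rw [h2]
      _ = _ := by ring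

lemma qexp_full {K : Type*} [Field K] (q : K[X]) (hq : q.Monic)
    (hdeg : 1 ≤ q.degree) (f : K[X]) :
    f = ∑ j ∈ Finset.range (f.natDegree + 1), ((f /ₘ q ^ j) %ₘ q) * q ^ j := by
  have hz : f /ₘ q ^ (f.natDegree + 1) = 0 := by
    rw [divByMonic_eq_zero_iff (hq.pow _)]
    refine lt_of_le_of_lt degree_le_natDegree ?_
    rw [degree_eq_natDegree (hq.pow _).ne_zero, hq.natDegree_pow]
    have hd : 0 < q.natDegree := natDegree_pos_iff_degree_pos.mpr (lt_of_lt_of_le zero_lt_one hdeg)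
    refine Nat.cast_lt.mpr ?_
    calc f.natDegree < f.natDegree + 1 := Nat.lt_succ_self _
      _ = (f.natDegree + 1) * 1 := (mul_one _).symm
      _ ≤ (f.natDegree + 1) * q.natDegree := Nat.mul_le_mul_left _ hd
  have := qexp_partial q hq hdeg f (f.natDegree + 1)
  rwa [hz, zero_mul, add_zero] at this

/-- for a simple algebraic valued extension `L = K(η)` with
ramification index `1`, and a complete set `{Q_i}` for the induced valuation
`ν(f) = v(f(η))`, the valuation ring `O_L = {x | v x ≥ 0}` is generated, as a ring,
by (the image of) `O_K` together with the normalized elements `Q̃_i(η) = Q_i(η)/a_i`. -/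
theorem integers_generated_by_complete_set {K L Γ ι : Type*} [Field K] [Field L]
    [Algebra K L] [AddCommGroup Γ] [LinearOrder Γ] [IsOrderedAddMonoid Γ]
    (η : L) (hint : IsIntegral K η) (hgen : Algebra.adjoin K {η} = ⊤)
    (v : L → WithTop Γ)
    (hv0 : ∀ x, v x = ⊤ ↔ x = 0)
    (hvmul : ∀ x y, v (x * y) = v x + v y)
    (hvadd : ∀ x y, min (v x) (v y) ≤ v (x + y))
    -- ramification index 1: every value of `L` is a value of `K`
    (hram : ∀ x : L, x ≠ 0 → ∃ c : K, v (algebraMap K L c) = v x)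
    (Q : ι → Polynomial K)
    (hQmon : ∀ i, (Q i).Monic) (hQdeg : ∀ i, 1 ≤ (Q i).degree)
    -- completeness of the set {Q_i} for ν = v ∘ ev_η
    (hcomplete : ∀ f : Polynomial K, f ≠ 0 → ∃ i, (Q i).degree ≤ f.degree ∧
      v (Polynomial.aeval η f) =
        truncAdd (fun g => v (Polynomial.aeval η g)) (Q i) f)
    (a : ι → K)
    (ha : ∀ i, Polynomial.aeval η (Q i) ≠ 0 →
      v (algebraMap K L (a i)) = v (Polynomial.aeval η (Q i))) :
    (Subring.closure
        ((algebraMap K L '' {c : K | 0 ≤ v (algebraMap K L c)}) ∪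
          {x : L | ∃ i, Polynomial.aeval η (Q i) ≠ 0 ∧
            x = Polynomial.aeval η (Q i) / algebraMap K L (a i)}) : Set L)
      = {x : L | 0 ≤ v x} := by
  set A := algebraMap K L with hA
  set S : Set L := (A '' {c : K | 0 ≤ v (A c)}) ∪
      {x : L | ∃ i, aeval η (Q i) ≠ 0 ∧ x = aeval η (Q i) / A (a i)} with hS
  -- basic valuation facts
  have hv1 : v 1 = 0 := by
    have h := hvmul 1 1
    rw [mul_one] at h
    have hne : v 1 ≠ ⊤ := fun h => one_ne_zero ((hv0 1).mp h)
    cases hv : v (1 : L) with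
    | top => exact absurd hv hne
    | coe g =>
      rw [hv, ← WithTop.coe_add, WithTop.coe_inj] at h
      exact_mod_cast left_eq_add.mp h
  have hvneg1 : v (-1 : L) = 0 := by
    have h := hvmul (-1 : L) (-1)
    rw [neg_mul_neg, one_mul, hv1] at h
    have hne : v (-1 : L) ≠ ⊤ := fun h => (neg_ne_zero.mpr one_ne_zero) ((hv0 _).mp h)
    cases hv : v (-1 : L) with
    | top => exact absurd hv hne
    | coe g =>
      rw [hv, ← WithTop.coe_add] at h
      have hg : g + g = 0 := by exact_mod_cast h.symm
      have hg0 : g = 0 := by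
        rcases lt_trichotomy g 0 with h' | h' | h'
        · have h2 := add_lt_add h' h'
          rw [add_zero] at h2
          exact absurd hg (ne_of_lt h2)
        · exact h'
        · have h2 := add_lt_add h' h'
          rw [add_zero] at h2
          exact absurd hg (ne_of_gt h2)
      exact_mod_cast hg0
  have hvneg : ∀ x : L, v (-x) = v x := by
    intro x
    have : (-x : L) = -1 * x := by ring
    rw [this, hvmul, hvneg1, zero_add]
  have hvinv : ∀ x : L, x ≠ 0 → v x + v x⁻¹ = 0 := by
    intro x hx
    rw [← hvmul, mul_inv_cancel₀ hx, hv1]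
  -- the target as a subring
  have hv00 : v (0 : L) = ⊤ := (hv0 0).mpr rfl
  set R : Subring L :=
    { carrier := {x : L | 0 ≤ v x}
      one_mem' := le_of_eq hv1.symm
      zero_mem' := by simp only [Set.mem_setOf_eq, hv00]; exact le_top
      mul_mem' := fun {x y} hx hy => by
        simp only [Set.mem_setOf_eq, hvmul]; exact add_nonneg hx hy
      add_mem' := fun {x y} hx hy => le_trans (le_min hx hy) (hvadd x y)
      neg_mem' := fun {x} hx => by simp only [Set.mem_setOf_eq, hvneg] at *; exact hx } with hR
  -- generators have nonnegative value
  have hSsub : S ⊆ {x : L | 0 ≤ v x} := by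
    rintro x (⟨c, hc, rfl⟩ | ⟨i, hQ0, rfl⟩)
    · exact hc
    · have hAa : v (A (a i)) = v (aeval η (Q i)) := ha i hQ0
      have hAane : A (a i) ≠ 0 := by
        intro h
        rw [h, (hv0 0).mpr rfl] at hAa
        exact hQ0 ((hv0 _).mp hAa.symm)
      have : v (aeval η (Q i) / A (a i)) = 0 := by
        rw [div_eq_mul_inv, hvmul, ← hAa, hvinv _ hAane]
      rw [Set.mem_setOf_eq, this]
  -- hvpow
  have hvpow : ∀ (x y : L), v x = v y → ∀ m : ℕ, v (x ^ m) = v (y ^ m) := by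
    intro x y hxy m
    induction m with
    | zero => rw [pow_zero, pow_zero]
    | succ m ih => rw [pow_succ, pow_succ, hvmul, hvmul, ih, hxy]
  -- key induction
  have key : ∀ n : ℕ, ∀ f : K[X], f.natDegree ≤ n → 0 ≤ v (aeval η f) →
      aeval η f ∈ Subring.closure S := by
    intro n
    induction n using Nat.strong_induction_on with
    | _ n ih =>
      intro f hfn hfpos
      by_cases h0 : f.natDegree = 0
      · obtain ⟨c, rfl⟩ := natDegree_eq_zero.mp h0
        rw [aeval_C] at hfpos ⊢
        exact Subring.subset_closure (Or.inl ⟨c, hfpos, rfl⟩)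
      · have hNpos : 0 < f.natDegree := Nat.pos_of_ne_zero h0
        have hf0 : f ≠ 0 := fun h => h0 (h ▸ natDegree_zero)
        obtain ⟨i, hdegQ, htr⟩ := hcomplete f hf0
        set q := Q i with hq
        have hqmon : q.Monic := hQmon i
        have hqdeg : 1 ≤ q.degree := hQdeg i
        have hqN : q.natDegree ≤ f.natDegree := natDegree_le_natDegree hdegQ
        set N := f.natDegree with hN
        -- expansion
        have hexp := qexp_full q hqmon hqdeg f
        have heval : aeval η f =
            ∑ j ∈ Finset.range (N + 1), aeval η ((f /ₘ q ^ j) %ₘ q) * (aeval η q) ^ j := by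
          conv_lhs => rw [hexp]
          rw [map_sum]
          exact Finset.sum_congr rfl fun j _ => by rw [map_mul, map_pow]
        simp only [truncAdd] at htr
        -- each term has nonnegative value
        have hterm : ∀ j ∈ Finset.range (N + 1),
            0 ≤ v (aeval η ((f /ₘ q ^ j) %ₘ q) * (aeval η q) ^ j) := by
          intro j hj
          have h1 : v (aeval η f) ≤ v (aeval η ((f /ₘ q ^ j) %ₘ q * q ^ j)) :=
            htr ▸ Finset.inf_le hj
          rw [map_mul, map_pow] at h1
          exact le_trans hfpos h1
        have hfjdeg : ∀ j : ℕ, ((f /ₘ q ^ j) %ₘ q).natDegree < N := by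
          intro j
          rcases eq_or_ne ((f /ₘ q ^ j) %ₘ q) 0 with h | h
          · rw [h, natDegree_zero]; exact hNpos
          · exact lt_of_lt_of_le (natDegree_lt_natDegree h (degree_modByMonic_lt _ hqmon)) hqN
        rw [heval]
        refine Subring.sum_mem _ fun j hj => ?_
        set fj := (f /ₘ q ^ j) %ₘ q with hfj
        rcases eq_or_ne (aeval η q) 0 with hQ0 | hQ0
        · rcases Nat.eq_zero_or_pos j with rfl | hjpos
          · rw [pow_zero ((aeval η) q), mul_one]
            refine ih fj.natDegree (lt_of_lt_of_le (hfjdeg 0) hfn) fj le_rfl ?_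
            have h' := hterm 0 hj
            rwa [pow_zero ((aeval η) q), mul_one] at h'
          · rw [hQ0, zero_pow (Nat.pos_iff_ne_zero.mp hjpos), mul_zero]
            exact Subring.zero_mem _
        · have hAa : v (A (a i)) = v (aeval η q) := ha i hQ0
          have hAane : A (a i) ≠ 0 := by
            intro h
            rw [h, (hv0 0).mpr rfl] at hAa
            exact hQ0 ((hv0 _).mp hAa.symm)
          have hQtmem : aeval η q / A (a i) ∈ Subring.closure S :=
            Subring.subset_closure (Or.inr ⟨i, hQ0, rfl⟩)
          set g : K[X] := C ((a i) ^ j) * fj with hg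
          have hgeval : aeval η g = (A (a i)) ^ j * aeval η fj := by
            rw [hg, map_mul, aeval_C, map_pow]
          have hgval : v (aeval η g) = v (aeval η fj * (aeval η q) ^ j) := by
            rw [hgeval, hvmul, hvmul, hvpow _ _ hAa j, add_comm]
          have hgmem : aeval η g ∈ Subring.closure S := by
            refine ih g.natDegree
              (lt_of_lt_of_le (lt_of_le_of_lt (natDegree_C_mul_le _ _) (hfjdeg j)) hfn)
              g le_rfl ?_
            rw [hgval]
            exact hterm j hj
          have hid : aeval η fj * (aeval η q) ^ j = aeval η g * (aeval η q / A (a i)) ^ j := by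
            rw [hgeval, div_pow]
            field_simp
          rw [hid]
          exact Subring.mul_mem _ hgmem (Subring.pow_mem _ hQtmem j)
  -- assemble
  apply Set.Subset.antisymm
  · intro x hx
    exact (Subring.closure_le.mpr hSsub : Subring.closure S ≤ R) hx
  · intro x hx
    have hx' : x ∈ Algebra.adjoin K ({η} : Set L) := hgen ▸ Algebra.mem_top
    rw [Algebra.adjoin_singleton_eq_range_aeval] at hx'
    obtain ⟨f, rfl⟩ := hx'
    exact key f.natDegree f le_rfl hx
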